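/- Let f : ℤ^n → ℝ ∪ {∞} satisfy f(x+𝟙_n) = f(x) + r for some constant r. Suppose the set Finite(f) := {x : f(x) < ∞} is L-convex, and for any x ∈ ℤ^n and subsets I ⊆ J of [n] we have f(x) + f(x + e_I + e_J) ≥ f(x + e_I) + f(x + e_J). Then for any x, y, x', y' ∈ ℤ^n with x + y = x' + y' and x' ∈ Π(x,y), we have f(x) + f(y) ≥ f(x') + f(y'). -/

import Mathlib

def PiSet {n : ℕ} (x y : Fin n → ℤ) : Set (Fin n → ℤ) :=
  {z | ∀ i j : Fin n, i < j →
    min (x i - x j) (y i - y j) ≤ z i - z j ∧ z i - z j ≤ max (x i - x j) (y i - y j)}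

/-- Indicator vector of a subset of coordinates. -/
def eVec {n : ℕ} (S : Finset (Fin n)) : Fin n → ℤ := fun i => if i ∈ S then 1 else 0

namespace LAux
open List

/-- Sum of indicator vectors of a list of sets. -/
def vsum {n : ℕ} : List (Finset (Fin n)) → (Fin n → ℤ)
  | [] => 0
  | B :: L => eVec B + vsum L

/-- A list of finsets which is decreasing (each element contains the next). -/
abbrev Decr {n : ℕ} (L : List (Finset (Fin n))) : Prop :=
  List.Chain' (fun A B => B ⊆ A) L

instance {n : ℕ} : IsTrans (Finset (Fin n)) (fun A B => B ⊆ A) :=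
  ⟨fun _ _ _ h1 h2 => h2.trans h1⟩

lemma decr_tail {n : ℕ} {B : Finset (Fin n)} {L : List (Finset (Fin n))}
    (h : Decr (B :: L)) : Decr L := h.tail

lemma decr_sublist {n : ℕ} {M L : List (Finset (Fin n))} (hL : Decr L) (h : M <+ L) :
    Decr M := hL.sublist h

lemma decr_cons_sub {n : ℕ} {B : Finset (Fin n)} :
    ∀ {L : List (Finset (Fin n))}, Decr (B :: L) → ∀ C ∈ L, C ⊆ B := by
  intro L
  induction L generalizing B with
  | nil => intro _ C hC; cases hC
  | cons D L ih =>
      intro h C hC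
      have h1 : D ⊆ B := (List.isChain_cons_cons.mp h).1
      have h2 : Decr (D :: L) := (List.isChain_cons_cons.mp h).2
      rcases List.mem_cons.mp hC with rfl | hC
      · exact h1
      · exact (ih h2 C hC).trans h1

lemma decr_cons {n : ℕ} {B : Finset (Fin n)} {L : List (Finset (Fin n))}
    (hL : Decr L) (hB : ∀ C ∈ L, C ⊆ B) : Decr (B :: L) := by
  apply List.isChain_cons.mpr
  refine ⟨fun y hy => hB y (List.mem_of_mem_head? hy), hL⟩

/-- comparability of coordinates along a decreasing chain -/
lemma comp {n : ℕ} : ∀ {L : List (Finset (Fin n))}, Decr L → ∀ i j : Fin n,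
    (∀ B ∈ L, i ∈ B → j ∈ B) ∨ (∀ B ∈ L, j ∈ B → i ∈ B) := by
  intro L
  induction L with
  | nil => intro _ i j; left; intro B hB; cases hB
  | cons B L ih =>
      intro h i j
      have hsub : ∀ C ∈ L, C ⊆ B := decr_cons_sub h
      rcases ih (decr_tail h) i j with h1 | h1
      · by_cases hB : i ∈ B → j ∈ B
        · left; intro C hC
          rcases List.mem_cons.mp hC with rfl | hC
          · exact hB
          · exact h1 C hC
        · push_neg at hB
          right; intro C hC hjC
          rcases List.mem_cons.mp hC with rfl | hC
          · exact absurd hjC hB.2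
          · exact absurd (hsub C hC hjC) hB.2
      · by_cases hB : j ∈ B → i ∈ B
        · right; intro C hC
          rcases List.mem_cons.mp hC with rfl | hC
          · exact hB
          · exact h1 C hC
        · push_neg at hB
          left; intro C hC hiC
          rcases List.mem_cons.mp hC with rfl | hC
          · exact absurd hiC hB.2
          · exact absurd (hsub C hC hiC) hB.2

lemma sublist_sum_nonneg_le {α : Type*} {M L : List α} (h : M <+ L) (g : α → ℤ)
    (hg : ∀ a ∈ L, 0 ≤ g a) : (M.map g).sum ≤ (L.map g).sum := by
  induction h with
  | slnil => simp
  | cons a h ih =>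
      simp only [List.map_cons, List.sum_cons]
      have := ih (fun b hb => hg b (List.mem_cons_of_mem a hb))
      have := hg a (List.mem_cons_self)
      omega
  | cons_cons a h ih =>
      simp only [List.map_cons, List.sum_cons]
      have := ih (fun b hb => hg b (List.mem_cons_of_mem a hb))
      omega

lemma vsum_sub_apply {n : ℕ} (i j : Fin n) :
    ∀ (L : List (Finset (Fin n))),
      vsum L i - vsum L j = (L.map (fun B => eVec B i - eVec B j)).sum := by
  intro L
  induction L with
  | nil => simp [vsum]
  | cons B L ih => simp [vsum]; omega

lemma mem_pi {n : ℕ} {L M : List (Finset (Fin n))} (hL : Decr L) (hM : M <+ L)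
    (x : Fin n → ℤ) : (x + vsum M) ∈ PiSet x (x + vsum L) := by
  intro i j _
  have key : min 0 (vsum L i - vsum L j) ≤ vsum M i - vsum M j ∧
      vsum M i - vsum M j ≤ max 0 (vsum L i - vsum L j) := by
    rcases comp hL i j with hc | hc
    · -- i ∈ B → j ∈ B for all B ∈ L : each term eVec B i - eVec B j ≤ 0
      set g : Finset (Fin n) → ℤ := fun B => eVec B j - eVec B i with hg
      have hgn : ∀ B ∈ L, 0 ≤ g B := by
        intro B hB
        simp only [hg, eVec]
        by_cases hiB : i ∈ B
        · simp [hiB, hc B hB hiB]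
        · by_cases hjB : j ∈ B <;> simp [hiB, hjB]
      have h1 : ((M.map g).sum : ℤ) ≤ (L.map g).sum := sublist_sum_nonneg_le hM g hgn
      have h2 : (0:ℤ) ≤ (M.map g).sum := by
        have := sublist_sum_nonneg_le (List.nil_sublist M) g
          (fun a ha => hgn a (hM.subset ha))
        simpa using this
      have e1 : vsum M j - vsum M i = (M.map g).sum := vsum_sub_apply j i M
      have e2 : vsum L j - vsum L i = (L.map g).sum := vsum_sub_apply j i L
      omega
    · set g : Finset (Fin n) → ℤ := fun B => eVec B i - eVec B j with hg
      have hgn : ∀ B ∈ L, 0 ≤ g B := by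
        intro B hB
        simp only [hg, eVec]
        by_cases hjB : j ∈ B
        · simp [hjB, hc B hB hjB]
        · by_cases hiB : i ∈ B <;> simp [hiB, hjB]
      have h1 : ((M.map g).sum : ℤ) ≤ (L.map g).sum := sublist_sum_nonneg_le hM g hgn
      have h2 : (0:ℤ) ≤ (M.map g).sum := by
        have := sublist_sum_nonneg_le (List.nil_sublist M) g
          (fun a ha => hgn a (hM.subset ha))
        simpa using this
      have e1 : vsum M i - vsum M j = (M.map g).sum := vsum_sub_apply i j M
      have e2 : vsum L i - vsum L j = (L.map g).sum := vsum_sub_apply i j L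
      omega
  constructor
  · simp only [Pi.add_apply]
    omega
  · simp only [Pi.add_apply]
    omega


/-- `Merge M N L` : `L` is an interleaving of `M` and `N`. -/
inductive Merge {α : Type*} : List α → List α → List α → Prop
  | nil : Merge [] [] []
  | left {a : α} {M N L : List α} : Merge M N L → Merge (a :: M) N (a :: L)
  | right {a : α} {M N L : List α} : Merge M N L → Merge M (a :: N) (a :: L)

lemma Merge.sublist_left {α : Type*} {M N L : List α} (h : Merge M N L) : M <+ L := by
  induction h with
  | nil => simp
  | left _ ih => exact ih.cons₂ _
  | right _ ih => exact ih.cons _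

lemma Merge.sublist_right {α : Type*} {M N L : List α} (h : Merge M N L) : N <+ L := by
  induction h with
  | nil => simp
  | left _ ih => exact ih.cons _
  | right _ ih => exact ih.cons₂ _

lemma Merge.append {α : Type*} {M N L M' N' L' : List α} (h : Merge M N L)
    (h' : Merge M' N' L') : Merge (M ++ M') (N ++ N') (L ++ L') := by
  induction h with
  | nil => simpa using h'
  | left _ ih => exact Merge.left ih
  | right _ ih => exact Merge.right ih

lemma Merge.vsum_eq {n : ℕ} {M N L : List (Finset (Fin n))} (h : Merge M N L) :
    vsum M + vsum N = vsum L := by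
  induction h with
  | nil => simp [vsum]
  | left _ ih => show eVec _ + vsum _ + vsum _ = eVec _ + vsum _; rw [← ih]; abel
  | right _ ih => show vsum _ + (eVec _ + vsum _) = eVec _ + vsum _; rw [← ih]; abel

/-- the list [g 1, g 2, ..., g k] -/
def buildL {n : ℕ} (g : ℕ → Finset (Fin n)) : ℕ → List (Finset (Fin n))
  | 0 => []
  | k+1 => buildL g k ++ [g (k+1)]

/-- the sublist of [g 1, ..., g k] consisting of the g t with q t = true -/
def buildF {n : ℕ} (g : ℕ → Finset (Fin n)) (q : ℕ → Bool) : ℕ → List (Finset (Fin n))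
  | 0 => []
  | k+1 => buildF g q k ++ (if q (k+1) then [g (k+1)] else [])

lemma merge_build {n : ℕ} (g : ℕ → Finset (Fin n)) (q : ℕ → Bool) (k : ℕ) :
    Merge (buildF g q k) (buildF g (fun t => ! q t) k) (buildL g k) := by
  induction k with
  | zero => exact Merge.nil
  | succ k ih =>
      refine Merge.append ih ?_
      by_cases h : q (k+1) <;> simp [h]
      · exact Merge.left Merge.nil
      · exact Merge.right Merge.nil

lemma buildL_decr {n : ℕ} (g : ℕ → Finset (Fin n)) (hg : ∀ s t, s ≤ t → g t ⊆ g s) (k : ℕ) :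
    Decr (buildL g k) ∧ ∀ A ∈ buildL g k, g (k+1) ⊆ A := by
  induction k with
  | zero => exact ⟨List.isChain_nil, by simp [buildL]⟩
  | succ k ih =>
      constructor
      · apply List.isChain_append.mpr
        refine ⟨ih.1, List.isChain_singleton _, ?_⟩
        intro a ha b hb
        have haL : a ∈ buildL g k := List.mem_of_mem_getLast? ha
        have hb' : b = g (k+1) := by simpa using hb.symm
        rw [hb']
        exact ih.2 a haL
      · intro A hA
        rcases List.mem_append.mp hA with hA | hA
        · exact (hg (k+1) (k+2) (by omega)).trans (ih.2 A hA)
        · have : A = g (k+1) := by simpa [buildL] using hA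
          rw [this]
          exact hg (k+1) (k+2) (by omega)

lemma vsum_append {n : ℕ} (A B : List (Finset (Fin n))) :
    vsum (A ++ B) = vsum A + vsum B := by
  induction A with
  | nil => simp [vsum]
  | cons C A ih => show eVec C + vsum (A ++ B) = eVec C + vsum A + vsum B
                   rw [ih]; abel


section Flemmas

variable {n : ℕ} (f : (Fin n → ℤ) → WithTop ℝ)
variable (hfin : ∀ x y : Fin n → ℤ, f x ≠ ⊤ → f y ≠ ⊤ → ∀ z ∈ PiSet x y, f z ≠ ⊤)
variable (hpar : ∀ (x : Fin n → ℤ) (I J : Finset (Fin n)), I ⊆ J →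
      f (x + eVec I) + f (x + eVec J) ≤ f x + f (x + eVec I + eVec J))

include hfin hpar in
lemma lemD : ∀ (L : List (Finset (Fin n))) (C : Finset (Fin n)) (x : Fin n → ℤ),
    Decr (C :: L) →
    f (x + eVec C) + f (x + vsum L) ≤ f x + f (x + vsum (C :: L)) := by
  intro L
  induction L with
  | nil =>
      intro C x _
      have e1 : x + vsum ([] : List (Finset (Fin n))) = x := by simp [vsum]
      have e2 : x + vsum [C] = x + eVec C := by simp [vsum]
      rw [e1, e2, add_comm (f (x + eVec C)) (f x)]
  | cons B L ih =>
      intro C x hchain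
      by_cases hx : f x = ⊤
      · simp [hx]
      by_cases htop : f (x + vsum (C :: B :: L)) = ⊤
      · simp [htop]
      have hfin' : ∀ M : List (Finset (Fin n)), M <+ (C :: B :: L) → f (x + vsum M) ≠ ⊤ :=
        fun M hM => hfin x (x + vsum (C :: B :: L)) hx htop _ (mem_pi hchain hM x)
      -- basic sublists
      have sB : [B] <+ (C :: B :: L) := ((List.nil_sublist L).cons₂ B).cons C
      have sC : [C] <+ (C :: B :: L) := (List.nil_sublist (B :: L)).cons₂ C
      have sCB : [C, B] <+ (C :: B :: L) := ((List.nil_sublist L).cons₂ B).cons₂ C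
      have sBL : (B :: L) <+ (C :: B :: L) := (List.Sublist.refl (B :: L)).cons C
      -- point identities
      have eB : x + vsum [B] = x + eVec B := by simp [vsum]
      have eCB : x + vsum [C, B] = x + eVec B + eVec C := by
        show x + (eVec C + (eVec B + 0)) = x + eVec B + eVec C
        abel
      have eC : x + vsum [C] = x + eVec C := by simp [vsum]
      have eBL : x + eVec B + vsum L = x + vsum (B :: L) := by
        show x + eVec B + vsum L = x + (eVec B + vsum L); rw [add_assoc]
      have eCBL : x + eVec B + vsum (C :: L) = x + vsum (C :: B :: L) := by
        show x + eVec B + (eVec C + vsum L) = x + (eVec C + (eVec B + vsum L))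
        abel
      -- finiteness
      have fB : f (x + eVec B) ≠ ⊤ := by rw [← eB]; exact hfin' [B] sB
      have fC : f (x + eVec C) ≠ ⊤ := by rw [← eC]; exact hfin' [C] sC
      have fCB : f (x + eVec B + eVec C) ≠ ⊤ := by rw [← eCB]; exact hfin' [C, B] sCB
      have fBL : f (x + vsum (B :: L)) ≠ ⊤ := hfin' (B :: L) sBL
      -- chain facts
      have hBC : B ⊆ C := (List.isChain_cons_cons.mp hchain).1
      have hBLdec : Decr (B :: L) := (List.isChain_cons_cons.mp hchain).2
      have hCL : Decr (C :: L) := by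
        apply decr_cons (decr_tail hBLdec)
        intro D hD
        exact (decr_cons_sub hBLdec D hD).trans hBC
      -- the two inequalities
      have h1 := hpar x B C hBC
      have h2 := ih C (x + eVec B) hCL
      rw [eBL, eCBL] at h2
      -- lift everything to ℝ
      lift f x to ℝ using hx with a ha
      lift f (x + eVec B) to ℝ using fB with b hb
      lift f (x + eVec C) to ℝ using fC with c hc
      lift f (x + eVec B + eVec C) to ℝ using fCB with d hd
      lift f (x + vsum (B :: L)) to ℝ using fBL with e he
      lift f (x + vsum (C :: B :: L)) to ℝ using htop with g hg
      rw [← WithTop.coe_add, ← WithTop.coe_add, WithTop.coe_le_coe] at h1 h2 ⊢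
      linarith

include hfin hpar in
lemma lemC : ∀ {M N L : List (Finset (Fin n))}, Merge M N L →
    ∀ x : Fin n → ℤ, Decr L →
    f (x + vsum M) + f (x + vsum N) ≤ f x + f (x + vsum L) := by
  intro M N L hmer
  induction hmer with
  | nil =>
      intro x _
      have e1 : x + vsum ([] : List (Finset (Fin n))) = x := by simp [vsum]
      rw [e1]
  | @left a M N L hm ih =>
      intro x hch
      by_cases hx : f x = ⊤
      · simp [hx]
      by_cases htop : f (x + vsum (a :: L)) = ⊤
      · simp [htop]
      have hfin' : ∀ P : List (Finset (Fin n)), P <+ (a :: L) → f (x + vsum P) ≠ ⊤ :=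
        fun P hP => hfin x (x + vsum (a :: L)) hx htop _ (mem_pi hch hP x)
      have hsubM : M <+ L := hm.sublist_left
      have hsubN : N <+ L := hm.sublist_right
      have eA : ∀ P : List (Finset (Fin n)), x + eVec a + vsum P = x + vsum (a :: P) := by
        intro P; show x + eVec a + vsum P = x + (eVec a + vsum P); rw [add_assoc]
      have ea : x + vsum [a] = x + eVec a := by simp [vsum]
      -- chain facts
      have hL : Decr L := decr_tail hch
      have haN : Decr (a :: N) := by
        apply decr_cons (decr_sublist hL hsubN)
        intro D hD
        exact decr_cons_sub hch D (hsubN.subset hD)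
      -- finiteness
      have fa : f (x + eVec a) ≠ ⊤ := by
        rw [← ea]; exact hfin' [a] ((List.nil_sublist L).cons₂ a)
      have faM : f (x + vsum (a :: M)) ≠ ⊤ := hfin' (a :: M) (hsubM.cons₂ a)
      have faN : f (x + vsum (a :: N)) ≠ ⊤ := hfin' (a :: N) (hsubN.cons₂ a)
      have fN : f (x + vsum N) ≠ ⊤ := hfin' N (hsubN.cons a)
      -- inequalities
      have h2 := ih (x + eVec a) hL
      rw [eA M, eA N, eA L] at h2
      have h1 := lemD f hfin hpar N a x haN
      lift f x to ℝ using hx with v0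
      lift f (x + eVec a) to ℝ using fa with v1
      lift f (x + vsum (a :: M)) to ℝ using faM with v2
      lift f (x + vsum (a :: N)) to ℝ using faN with v3
      lift f (x + vsum N) to ℝ using fN with v4
      lift f (x + vsum (a :: L)) to ℝ using htop with v5
      rw [← WithTop.coe_add, ← WithTop.coe_add, WithTop.coe_le_coe] at h1 h2 ⊢
      linarith
  | @right a M N L hm ih =>
      intro x hch
      by_cases hx : f x = ⊤
      · simp [hx]
      by_cases htop : f (x + vsum (a :: L)) = ⊤
      · simp [htop]
      have hfin' : ∀ P : List (Finset (Fin n)), P <+ (a :: L) → f (x + vsum P) ≠ ⊤ :=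
        fun P hP => hfin x (x + vsum (a :: L)) hx htop _ (mem_pi hch hP x)
      have hsubM : M <+ L := hm.sublist_left
      have hsubN : N <+ L := hm.sublist_right
      have eA : ∀ P : List (Finset (Fin n)), x + eVec a + vsum P = x + vsum (a :: P) := by
        intro P; show x + eVec a + vsum P = x + (eVec a + vsum P); rw [add_assoc]
      have ea : x + vsum [a] = x + eVec a := by simp [vsum]
      have hL : Decr L := decr_tail hch
      have haM : Decr (a :: M) := by
        apply decr_cons (decr_sublist hL hsubM)
        intro D hD
        exact decr_cons_sub hch D (hsubM.subset hD)
      have fa : f (x + eVec a) ≠ ⊤ := by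
        rw [← ea]; exact hfin' [a] ((List.nil_sublist L).cons₂ a)
      have faM : f (x + vsum (a :: M)) ≠ ⊤ := hfin' (a :: M) (hsubM.cons₂ a)
      have faN : f (x + vsum (a :: N)) ≠ ⊤ := hfin' (a :: N) (hsubN.cons₂ a)
      have fM : f (x + vsum M) ≠ ⊤ := hfin' M (hsubM.cons a)
      have h2 := ih (x + eVec a) hL
      rw [eA M, eA N, eA L] at h2
      have h1 := lemD f hfin hpar M a x haM
      lift f x to ℝ using hx with v0
      lift f (x + eVec a) to ℝ using fa with v1
      lift f (x + vsum (a :: M)) to ℝ using faM with v2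
      lift f (x + vsum (a :: N)) to ℝ using faN with v3
      lift f (x + vsum M) to ℝ using fM with v4
      lift f (x + vsum (a :: L)) to ℝ using htop with v5
      rw [← WithTop.coe_add, ← WithTop.coe_add, WithTop.coe_le_coe] at h1 h2 ⊢
      linarith


lemma hr_gen (r : ℝ) (hr : ∀ x : Fin n → ℤ, f (x + fun _ => 1) = f x + (r : WithTop ℝ)) :
    ∀ (x : Fin n → ℤ) (a : ℤ), f (x + fun _ => a) = f x + (((a : ℝ) * r : ℝ) : WithTop ℝ) := by
  intro x a
  induction a using Int.induction_on with
  | zero => show f (x + 0) = _; simp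
  | succ a ih =>
      have e1 : x + (fun _ => ((a : ℤ) + 1)) = (x + fun _ => (a : ℤ)) + fun _ => (1 : ℤ) := by
        funext i; simp [add_assoc]
      rw [e1, hr, ih]
      rw [add_assoc, ← WithTop.coe_add]
      congr 2
      push_cast
      ring
  | pred a ih =>
      have e1 : (x + (fun _ => (-(a : ℤ) - 1))) + (fun _ => (1:ℤ)) = x + fun _ => (-(a:ℤ)) := by
        funext i; simp; ring
      have h2 := hr (x + fun _ => (-(a : ℤ) - 1))
      rw [e1, ih] at h2
      refine WithTop.add_right_cancel (WithTop.coe_ne_top (a := r)) ?_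
      rw [← h2, add_assoc, ← WithTop.coe_add]
      congr 2
      push_cast
      ring


end Flemmas
end LAux


open LAux in
/-- Condition (4) ⟹ condition (1) of Theorem 4.2: if f(x+𝟙) = f(x) + r, the finiteness
set of f is L-convex, and f satisfies the parallelogram inequalities
f(x) + f(x + e_I + e_J) ≥ f(x+e_I) + f(x+e_J) for I ⊆ J, then f is L-convex. -/
theorem stmt11 (n : ℕ) (f : (Fin n → ℤ) → WithTop ℝ) (r : ℝ)
    (hr : ∀ x : Fin n → ℤ, f (x + fun _ => 1) = f x + (r : WithTop ℝ))
    (hfin : ∀ x y : Fin n → ℤ, f x ≠ ⊤ → f y ≠ ⊤ → ∀ z ∈ PiSet x y, f z ≠ ⊤)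
    (hpar : ∀ (x : Fin n → ℤ) (I J : Finset (Fin n)), I ⊆ J →
      f (x + eVec I) + f (x + eVec J) ≤ f x + f (x + eVec I + eVec J)) :
    ∀ x y x' y' : Fin n → ℤ, x + y = x' + y' → x' ∈ PiSet x y →
      f x' + f y' ≤ f x + f y := by
  intro x y x' y' hsum hx'
  by_cases hn : n = 0
  · have hxx : x' = x := funext fun i => absurd i.isLt (by omega)
    have hyy : y' = y := by
      rw [hxx] at hsum
      exact (add_left_cancel hsum).symm
    rw [hxx, hyy]
  by_cases hfx : f x = ⊤
  · simp [hfx]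
  by_cases hfy : f y = ⊤
  · simp [hfy]
  haveI : Nonempty (Fin n) := ⟨⟨0, by omega⟩⟩
  have hU : (Finset.univ : Finset (Fin n)).Nonempty := Finset.univ_nonempty
  set d : Fin n → ℤ := fun i => y i - x i with hd
  set δ : Fin n → ℤ := fun i => x' i - x i with hδ
  have hb : ∀ i j : Fin n, min 0 (d i - d j) ≤ δ i - δ j ∧ δ i - δ j ≤ max 0 (d i - d j) := by
    intro i j
    rcases lt_trichotomy i j with h | h | h
    · have H := hx' i j h
      simp only [hd, hδ]
      omega
    · subst h; simp
    · have H := hx' j i h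
      simp only [hd, hδ]
      omega
  set m : ℤ := Finset.univ.inf' hU d with hm
  set c : ℤ := Finset.univ.inf' hU δ with hc
  set p : Fin n → ℤ := fun i => δ i - c with hp
  set dh : Fin n → ℤ := fun i => d i - m with hdh
  have hp0 : ∀ i, 0 ≤ p i := by
    intro i
    have h1 : c ≤ δ i := Finset.inf'_le δ (Finset.mem_univ i)
    simp only [hp]; omega
  have hpex : ∃ i, p i = 0 := by
    obtain ⟨i, _, hi⟩ := Finset.exists_mem_eq_inf' hU δ
    exact ⟨i, by simp only [hp]; omega⟩
  have hd0 : ∀ i, 0 ≤ dh i := by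
    intro i
    have h1 : m ≤ d i := Finset.inf'_le d (Finset.mem_univ i)
    simp only [hdh]; omega
  set k : ℕ := (Finset.univ.sup' hU dh).toNat with hk
  have hkk : ∀ i, dh i ≤ (k : ℤ) := fun i =>
    (Finset.le_sup' dh (Finset.mem_univ i)).trans (Int.self_le_toNat _)
  set Bset : ℕ → Finset (Fin n) := fun t => Finset.univ.filter (fun i => (t:ℤ) ≤ dh i) with hB
  have hBanti : ∀ s t : ℕ, s ≤ t → Bset t ⊆ Bset s := by
    intro s t hst i hi
    simp only [hB, Finset.mem_filter, Finset.mem_univ, true_and] at hi ⊢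
    have : (s:ℤ) ≤ (t:ℤ) := by exact_mod_cast hst
    omega
  set ρ : ℤ → ℤ := fun v => Finset.univ.inf' hU (fun i => p i + max 0 (v - dh i)) with hρ
  have hrle : ∀ (v : ℤ) (i : Fin n), ρ v ≤ p i + max 0 (v - dh i) := fun v i =>
    Finset.inf'_le _ (Finset.mem_univ i)
  have hrex : ∀ v : ℤ, ∃ i, ρ v = p i + max 0 (v - dh i) := by
    intro v
    obtain ⟨i, _, hi⟩ := Finset.exists_mem_eq_inf' hU (fun i => p i + max 0 (v - dh i))
    exact ⟨i, hi⟩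
  have hmono : ∀ v : ℤ, ρ v ≤ ρ (v+1) := by
    intro v
    obtain ⟨j, hj⟩ := hrex (v+1)
    have := hrle v j
    omega
  have hlip : ∀ v : ℤ, ρ (v+1) ≤ ρ v + 1 := by
    intro v
    obtain ⟨j, hj⟩ := hrex v
    have := hrle (v+1) j
    omega
  have hjump : ∀ v : ℤ, ρ (v+1) = ρ v ∨ ρ (v+1) = ρ v + 1 := by
    intro v
    have := hmono v
    have := hlip v
    omega
  have hρ0 : ρ 0 = 0 := by
    obtain ⟨i0, hi0⟩ := hpex
    have h1 : ρ 0 ≤ 0 := by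
      have := hrle 0 i0
      have := hd0 i0
      omega
    have h2 : 0 ≤ ρ 0 := by
      obtain ⟨j, hj⟩ := hrex 0
      have := hp0 j
      omega
    omega
  have hρd : ∀ i, ρ (dh i) = p i := by
    intro i
    have h1 : ρ (dh i) ≤ p i := by
      have := hrle (dh i) i
      omega
    have h2 : p i ≤ ρ (dh i) := by
      obtain ⟨j, hj⟩ := hrex (dh i)
      have hbij := (hb i j).2
      simp only [hp, hdh] at *
      omega
    omega
  set q : ℕ → Bool := fun t => decide (ρ ((t:ℤ) - 1) < ρ (t:ℤ)) with hq
  have hqval : ∀ K : ℕ, (q (K+1) = true) ↔ ρ (K:ℤ) < ρ ((K:ℤ)+1) := by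
    intro K
    have e1 : ((K+1:ℕ):ℤ) - 1 = (K:ℤ) := by push_cast; ring
    have e2 : ((K+1:ℕ):ℤ) = (K:ℤ)+1 := by push_cast; ring
    rw [hq]
    show decide (ρ (((K+1:ℕ):ℤ) - 1) < ρ ((K+1:ℕ):ℤ)) = true ↔ _
    rw [e1, e2, decide_eq_true_eq]
  -- value of vsum (buildL Bset K)
  have hvL : ∀ K : ℕ, ∀ i, vsum (buildL Bset K) i = min (dh i) (K:ℤ) := by
    intro K
    induction K with
    | zero =>
        intro i
        have := hd0 i
        simp only [buildL, vsum, Pi.zero_apply, Nat.cast_zero]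
        omega
    | succ K ih =>
        intro i
        rw [show buildL Bset (K+1) = buildL Bset K ++ [Bset (K+1)] from rfl, vsum_append]
        simp only [Pi.add_apply]
        rw [ih i]
        have e2 : ((K+1:ℕ):ℤ) = (K:ℤ)+1 := by push_cast; ring
        have hval : vsum [Bset (K+1)] i = if ((K+1:ℕ):ℤ) ≤ dh i then 1 else 0 := by
          simp only [vsum, eVec, Pi.add_apply, Pi.zero_apply, hB, Finset.mem_filter,
            Finset.mem_univ, true_and, add_zero]
        rw [hval]
        by_cases hin : ((K+1:ℕ):ℤ) ≤ dh i <;> simp only [hin, if_true, if_false] <;> omega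
  -- value of vsum (buildF Bset q K)
  have hvM : ∀ K : ℕ, ∀ i, vsum (buildF Bset q K) i = ρ (min (dh i) (K:ℤ)) := by
    intro K
    induction K with
    | zero =>
        intro i
        have h0 := hd0 i
        have : min (dh i) ((0:ℕ):ℤ) = 0 := by omega
        rw [this]
        simp only [buildF, vsum, Pi.zero_apply]
        omega
    | succ K ih =>
        intro i
        rw [show buildF Bset q (K+1)
              = buildF Bset q K ++ (if q (K+1) then [Bset (K+1)] else []) from rfl, vsum_append]
        simp only [Pi.add_apply]
        rw [ih i]
        have e2 : ((K+1:ℕ):ℤ) = (K:ℤ)+1 := by push_cast; ring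
        have h0 := hd0 i
        by_cases hqt : q (K+1) = true
        · have hjq : ρ ((K:ℤ)+1) = ρ (K:ℤ) + 1 := by
            have := (hqval K).mp hqt
            have := hlip (K:ℤ)
            omega
          rw [hqt]
          simp only [if_true]
          have hval : vsum [Bset (K+1)] i = if ((K+1:ℕ):ℤ) ≤ dh i then 1 else 0 := by
            simp only [vsum, eVec, Pi.add_apply, Pi.zero_apply, hB, Finset.mem_filter,
              Finset.mem_univ, true_and, add_zero]
          rw [hval]
          by_cases hin : ((K+1:ℕ):ℤ) ≤ dh i
          · have emin1 : min (dh i) ((K:ℤ)) = (K:ℤ) := by omega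
            have emin2 : min (dh i) (((K+1:ℕ)):ℤ) = (K:ℤ)+1 := by omega
            rw [emin1, emin2, hjq, if_pos hin]
          · have emin : min (dh i) (((K+1:ℕ)):ℤ) = min (dh i) ((K:ℤ)) := by omega
            rw [emin, if_neg hin, add_zero]
        · have hqf : q (K+1) = false := by
            cases hh : q (K+1)
            · rfl
            · exact absurd hh hqt
          have hjq : ρ ((K:ℤ)+1) = ρ (K:ℤ) := by
            have h1 : ¬ (ρ (K:ℤ) < ρ ((K:ℤ)+1)) := fun hcon => hqt ((hqval K).mpr hcon)
            have := hmono (K:ℤ)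
            omega
          rw [hqf]
          simp only [Bool.false_eq_true, if_false]
          have hval : vsum ([] : List (Finset (Fin n))) i = 0 := rfl
          rw [hval, add_zero]
          by_cases hin : ((K+1:ℕ):ℤ) ≤ dh i
          · have emin1 : min (dh i) ((K:ℤ)) = (K:ℤ) := by omega
            have emin2 : min (dh i) (((K+1:ℕ)):ℤ) = (K:ℤ)+1 := by omega
            rw [emin1, emin2, hjq]
          · have emin : min (dh i) (((K+1:ℕ)):ℤ) = min (dh i) ((K:ℤ)) := by omega
            rw [emin]
  -- assemble
  have hmer := merge_build Bset q k
  have hdec : Decr (buildL Bset k) := (buildL_decr Bset hBanti k).1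
  have hres := lemC f hfin hpar hmer x hdec
  have hvMk : x + vsum (buildF Bset q k) = x' + fun _ => (-c) := by
    funext i
    have h1 := hvM k i
    have h2 := hkk i
    have hmin : min (dh i) ((k:ℕ):ℤ) = dh i := by omega
    rw [hmin] at h1
    simp only [Pi.add_apply, h1, hρd i, hp, hδ]
    ring
  have hvLk : x + vsum (buildL Bset k) = y + fun _ => (-m) := by
    funext i
    have h1 := hvL k i
    have h2 := hkk i
    have hmin : min (dh i) ((k:ℕ):ℤ) = dh i := by omega
    rw [hmin] at h1
    simp only [Pi.add_apply, h1, hdh, hd]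
    ring
  have hvNk : x + vsum (buildF Bset (fun t => ! q t) k) = y' + fun _ => (c - m) := by
    funext i
    have hsumi : vsum (buildF Bset q k) i + vsum (buildF Bset (fun t => ! q t) k) i
        = vsum (buildL Bset k) i := by
      have := congrFun hmer.vsum_eq i
      simpa using this
    have h1 := hvM k i
    have h2 := hkk i
    have h3 := hvL k i
    have hmin : min (dh i) ((k:ℕ):ℤ) = dh i := by omega
    rw [hmin] at h1 h3
    have hyi : y' i = x i + y i - x' i := by
      have := congrFun hsum i
      simp only [Pi.add_apply] at this
      omega
    have hρi := hρd i
    simp only [Pi.add_apply]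
    simp only [hp, hδ, hdh, hd] at *
    omega
  rw [hvMk, hvNk, hvLk, hr_gen f r hr x' (-c), hr_gen f r hr y' (c-m), hr_gen f r hr y (-m)]
    at hres
  have EL : (f x' + ((((-c:ℤ):ℝ) * r : ℝ) : WithTop ℝ))
        + (f y' + ((((c-m:ℤ):ℝ) * r : ℝ) : WithTop ℝ))
      = (f x' + f y') + ((((-m:ℤ):ℝ) * r : ℝ) : WithTop ℝ) := by
    rw [add_add_add_comm, ← WithTop.coe_add]
    congr 2
    push_cast
    ring
  have ER : f x + (f y + ((((-m:ℤ):ℝ) * r : ℝ) : WithTop ℝ))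
      = (f x + f y) + ((((-m:ℤ):ℝ) * r : ℝ) : WithTop ℝ) := (add_assoc _ _ _).symm
  rw [EL, ER] at hres
  exact (WithTop.add_le_add_iff_right WithTop.coe_ne_top).mp hres
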